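/- If X is a saturated Kripke structure, then logical equivalence ≈ is a congruence on X: there exist a Kripke structure Y and a surjective Kripke homomorphism π : X → Y whose kernel {(x,x') | π(x) = π(x')} equals the relation ≈ on X. -/

import Mathlib

/-- Modal formulas over a set `Φ` of atomic propositions. -/
inductive ModalFormula (Φ : Type*) : Type _ where
  | atom : Φ → ModalFormula Φ
  | top  : ModalFormula Φ
  | bot  : ModalFormula Φ
  | neg  : ModalFormula Φ → ModalFormula Φ
  | and  : ModalFormula Φ → ModalFormula Φ → ModalFormula Φ
  | or   : ModalFormula Φ → ModalFormula Φ → ModalFormula Φ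
  | box  : ModalFormula Φ → ModalFormula Φ

/-- `◇φ := ¬□¬φ`. -/
def ModalFormula.dia {Φ : Type*} (φ : ModalFormula Φ) : ModalFormula Φ :=
  .neg (.box (.neg φ))

/-- A Kripke structure on state set `X`: a transition relation and a valuation. -/
structure KripkeStructure (Φ X : Type*) where
  R : X → X → Prop
  v : X → Set Φ

/-- Satisfaction `x ⊨ φ`. -/
def Satisfies {Φ X : Type*} (M : KripkeStructure Φ X) : X → ModalFormula Φ → Prop
  | x, .atom p  => p ∈ M.v x
  | _, .top     => True
  | _, .bot     => False
  | x, .neg φ   => ¬ Satisfies M x φ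
  | x, .and φ ψ => Satisfies M x φ ∧ Satisfies M x ψ
  | x, .or φ ψ  => Satisfies M x φ ∨ Satisfies M x ψ
  | x, .box φ   => ∀ y, M.R x y → Satisfies M y φ

/-- `B` is a bisimulation between `M` and `N`. -/
def IsBisimulation {Φ X Y : Type*} (M : KripkeStructure Φ X) (N : KripkeStructure Φ Y)
    (B : X → Y → Prop) : Prop :=
  ∀ x y, B x y →
    M.v x = N.v y ∧
    (∀ x', M.R x x' → ∃ y', N.R y y' ∧ B x' y') ∧
    (∀ y', N.R y y' → ∃ x', M.R x x' ∧ B x' y')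

/-- `x ∼ y` : there is a bisimulation relating `x` and `y`. -/
def Bisimilar {Φ X Y : Type*} (M : KripkeStructure Φ X) (N : KripkeStructure Φ Y)
    (x : X) (y : Y) : Prop :=
  ∃ B : X → Y → Prop, IsBisimulation M N B ∧ B x y

/-- `x ≈ y` : logical equivalence. -/
def LogEquiv {Φ X Y : Type*} (M : KripkeStructure Φ X) (N : KripkeStructure Φ Y)
    (x : X) (y : Y) : Prop :=
  ∀ φ : ModalFormula Φ, Satisfies M x φ ↔ Satisfies N y φ

/-- A Kripke homomorphism: a map whose graph is a bisimulation. -/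
def IsKripkeHom {Φ X Y : Type*} (M : KripkeStructure Φ X) (N : KripkeStructure Φ Y)
    (f : X → Y) : Prop :=
  IsBisimulation M N (fun x y => y = f x)

/-- `x` is m-saturated: whenever every finite subset of `S` is satisfied at some
successor of `x`, some successor of `x` satisfies all of `S`. -/
def MSaturated {Φ X : Type*} (M : KripkeStructure Φ X) (x : X) : Prop :=
  ∀ S : Set (ModalFormula Φ),
    (∀ S₀ ⊆ S, S₀.Finite → ∃ y, M.R x y ∧ ∀ φ ∈ S₀, Satisfies M y φ) →
    ∃ y, M.R x y ∧ ∀ φ ∈ S, Satisfies M y φ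

/-- A Kripke structure is saturated if every state is m-saturated. -/
def Saturated {Φ X : Type*} (M : KripkeStructure Φ X) : Prop :=
  ∀ x : X, MSaturated M x

lemma finite_conj {Φ X : Type*} (M : KripkeStructure Φ X) {S₀ : Set (ModalFormula Φ)}
    (h : S₀.Finite) :
    ∃ ψ : ModalFormula Φ, ∀ z, Satisfies M z ψ ↔ ∀ φ ∈ S₀, Satisfies M z φ := by
  refine Set.Finite.induction_on _ h ⟨ModalFormula.top, by simp [Satisfies]⟩ ?_
  rintro φ s - - ⟨ψ, hψ⟩
  refine ⟨.and φ ψ, fun z => ?_⟩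
  simp only [Satisfies, hψ, Set.mem_insert_iff]
  constructor
  · rintro ⟨h1, h2⟩ χ (rfl | hχ)
    · exact h1
    · exact h2 χ hχ
  · intro h; exact ⟨h φ (Or.inl rfl), fun χ hχ => h χ (Or.inr hχ)⟩

lemma exists_equiv_succ {Φ X : Type*} {M : KripkeStructure Φ X} (hM : Saturated M)
    {x x₀ y₀ : X} (he : LogEquiv M M x x₀) (hr : M.R x₀ y₀) :
    ∃ y, M.R x y ∧ LogEquiv M M y y₀ := by
  have hpre : ∀ S₀ ⊆ {φ | Satisfies M y₀ φ}, S₀.Finite →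
      ∃ y, M.R x y ∧ ∀ φ ∈ S₀, Satisfies M y φ := by
    intro S₀ hsub hfin
    obtain ⟨ψ, hψ⟩ := finite_conj M hfin
    have hx₀ : Satisfies M x₀ ψ.dia := by
      intro hbox
      exact hbox y₀ hr ((hψ y₀).2 fun φ hφ => hsub hφ)
    have hx : Satisfies M x ψ.dia := (he _).2 hx₀
    simp only [ModalFormula.dia, Satisfies, not_forall] at hx
    obtain ⟨y, hy, hyψ⟩ := hx
    rw [not_not] at hyψ
    exact ⟨y, hy, fun φ hφ => (hψ y).1 hyψ φ hφ⟩
  obtain ⟨y, hy, hall⟩ := hM x {φ | Satisfies M y₀ φ} hpre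
  refine ⟨y, hy, fun φ => ⟨fun h => ?_, fun h => hall φ h⟩⟩
  by_contra h0
  exact (hall (.neg φ) h0) h

/-- If `X` is saturated then logical equivalence `≈` is a congruence on `X`:
it is the kernel of a surjective Kripke homomorphism. -/
theorem logEquiv_is_congruence {Φ : Type u} {X : Type v}
    (M : KripkeStructure Φ X) (hM : Saturated M) :
    ∃ (Y : Type v) (N : KripkeStructure Φ Y) (π : X → Y),
      IsKripkeHom M N π ∧ Function.Surjective π ∧
      ∀ x x' : X, π x = π x' ↔ LogEquiv M M x x' := by
  let s : Setoid X := ⟨LogEquiv M M,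
    ⟨fun x φ => Iff.rfl, fun h φ => (h φ).symm, fun h1 h2 φ => (h1 φ).trans (h2 φ)⟩⟩
  refine ⟨Quotient s,
    { R := fun a b => ∃ p q, a = Quotient.mk s p ∧ b = Quotient.mk s q ∧ M.R p q
      v := Quotient.lift M.v (fun p q h => Set.ext fun a => h (.atom a)) },
    Quotient.mk s, ?_, ?_, ?_⟩
  · rintro x b rfl
    refine ⟨rfl, fun x' hx' => ⟨Quotient.mk s x', ⟨x, x', rfl, rfl, hx'⟩, rfl⟩, ?_⟩
    rintro b' ⟨p, q, hp, rfl, hpq⟩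
    have hxp : LogEquiv M M x p := Quotient.exact hp
    obtain ⟨y, hy, hyq⟩ := exists_equiv_succ hM hxp hpq
    exact ⟨y, hy, (Quotient.sound hyq).symm⟩
  · intro b
    obtain ⟨x, rfl⟩ := Quotient.exists_rep b
    exact ⟨x, rfl⟩
  · intro x x'
    exact ⟨Quotient.exact, fun h => Quotient.sound (by exact h)⟩
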